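/- Let F : ℝⁿ → ℝᵐ be continuously differentiable. Then the map x ↦ θ(x) is continuous on ℝⁿ. -/

import Mathlib

open scoped RealInnerProductSpace

/-- `φ_g(d) = max_{1 ≤ i ≤ m} ⟨g_i, d⟩ + ‖d‖²/2`. -/
noncomputable def phi {n m : ℕ} (g : Fin m → EuclideanSpace ℝ (Fin n))
    (d : EuclideanSpace ℝ (Fin n)) : ℝ :=
  (⨆ i, ⟪g i, d⟫) + ‖d‖ ^ 2 / 2


noncomputable def Theta {n m : ℕ} (g : Fin m → EuclideanSpace ℝ (Fin n)) : ℝ :=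
  ⨅ d, phi g d

section aux
variable {n m : ℕ}

lemma phi_lb (hm : 0 < m) (g : Fin m → EuclideanSpace ℝ (Fin n)) (M : ℝ)
    (hM : ∀ i, ‖g i‖ ≤ M)
    (d : EuclideanSpace ℝ (Fin n)) : -(M * ‖d‖) + ‖d‖ ^ 2 / 2 ≤ phi g d := by
  have : Nonempty (Fin m) := ⟨⟨0, hm⟩⟩
  have h1 : -(M * ‖d‖) ≤ ⨆ i, ⟪g i, d⟫ := by
    refine le_trans ?_ (le_ciSup (Set.Finite.bddAbove (Set.finite_range _)) (⟨0, hm⟩ : Fin m))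
    have := abs_real_inner_le_norm (g ⟨0, hm⟩) d
    have h2 := hM ⟨0, hm⟩
    have h3 : (0:ℝ) ≤ ‖d‖ := norm_nonneg _
    nlinarith [abs_le.mp this]
  unfold phi; linarith

lemma bddBelow_phi (hm : 0 < m) (g : Fin m → EuclideanSpace ℝ (Fin n)) :
    BddBelow (Set.range (phi g)) := by
  have : Nonempty (Fin m) := ⟨⟨0, hm⟩⟩
  refine ⟨-((⨆ i, ‖g i‖) ^ 2 / 2), ?_⟩
  rintro _ ⟨d, rfl⟩
  have h := phi_lb hm g (⨆ i, ‖g i‖)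
    (fun i => le_ciSup (f := fun i => ‖g i‖) (Set.Finite.bddAbove (Set.finite_range _)) i) d
  have h2 : (0:ℝ) ≤ ⨆ i, ‖g i‖ :=
    le_trans (norm_nonneg (g ⟨0, hm⟩))
      (le_ciSup (f := fun i => ‖g i‖) (Set.Finite.bddAbove (Set.finite_range _)) _)
  nlinarith [sq_nonneg (‖d‖ - ⨆ i, ‖g i‖)]

lemma phi_zero (hm : 0 < m) (g : Fin m → EuclideanSpace ℝ (Fin n)) : phi g 0 = 0 := by
  have : Nonempty (Fin m) := ⟨⟨0, hm⟩⟩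
  simp [phi]

lemma Theta_nonpos (hm : 0 < m) (g : Fin m → EuclideanSpace ℝ (Fin n)) : Theta g ≤ 0 := by
  have := ciInf_le (bddBelow_phi hm g) (0 : EuclideanSpace ℝ (Fin n))
  rwa [phi_zero hm] at this

end aux

lemma key {n m : ℕ} (hm : 0 < m) (g g' : Fin m → EuclideanSpace ℝ (Fin n)) (M δ : ℝ)
    (hM : ∀ i, ‖g i‖ ≤ M) (hMδ : ∀ i, ‖g i - g' i‖ ≤ δ) (hδ0 : 0 ≤ δ) :
    Theta g' ≤ Theta g + δ * (2 * M + 1) := by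
  have hne : Nonempty (Fin m) := ⟨⟨0, hm⟩⟩
  have hM0 : 0 ≤ M := (norm_nonneg _).trans (hM ⟨0, hm⟩)
  refine le_of_forall_pos_le_add fun ε hε => ?_
  set ε₁ := ε / (1 + 2 * δ) with hε₁def
  have hε₁ : 0 < ε₁ := div_pos hε (by linarith)
  obtain ⟨d, hd⟩ := exists_lt_of_ciInf_lt (show Theta g < Theta g + ε₁ by linarith)
  have hθ0 := Theta_nonpos hm g
  have hlb := phi_lb hm g M hM d
  have hnd : ‖d‖ ≤ 2 * M + 2 * ε₁ + 1 := by nlinarith [norm_nonneg d]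
  have h1 : Theta g' ≤ phi g' d := ciInf_le (bddBelow_phi hm g') d
  have h2 : phi g' d ≤ phi g d + δ * ‖d‖ := by
    have hsup : (⨆ i, ⟪g' i, d⟫) ≤ (⨆ i, ⟪g i, d⟫) + δ * ‖d‖ := by
      refine ciSup_le fun i => ?_
      have hle : ⟪g' i, d⟫ = ⟪g i, d⟫ + ⟪g' i - g i, d⟫ := by
        rw [inner_sub_left]; ring
      have hcs := abs_real_inner_le_norm (g' i - g i) d
      have h5 : ⟪g' i - g i, d⟫ ≤ δ * ‖d‖ := by
        have h3 : ‖g' i - g i‖ ≤ δ := by rw [norm_sub_rev]; exact hMδ i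
        nlinarith [abs_le.mp hcs, norm_nonneg d]
      have h4 : ⟪g i, d⟫ ≤ ⨆ i, ⟪g i, d⟫ :=
        le_ciSup (f := fun i => ⟪g i, d⟫) (Set.Finite.bddAbove (Set.finite_range _)) i
      linarith
    unfold phi; linarith
  have hδd : δ * ‖d‖ ≤ δ * (2 * M + 2 * ε₁ + 1) := mul_le_mul_of_nonneg_left hnd hδ0
  have hε₁eq : ε₁ * (1 + 2 * δ) = ε := by
    rw [hε₁def]; field_simp
  nlinarith

lemma cont_Theta {n m : ℕ} (hm : 0 < m) :
    Continuous (Theta : (Fin m → EuclideanSpace ℝ (Fin n)) → ℝ) := by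
  have hne : Nonempty (Fin m) := ⟨⟨0, hm⟩⟩
  rw [Metric.continuous_iff]
  intro g₀ ε hε
  set M : ℝ := (⨆ i, ‖g₀ i‖) + 1 with hMdef
  have hsup0 : 0 ≤ ⨆ i, ‖g₀ i‖ :=
    (norm_nonneg (g₀ ⟨0, hm⟩)).trans
      (le_ciSup (f := fun i => ‖g₀ i‖) (Set.Finite.bddAbove (Set.finite_range _)) _)
  have hM1 : (1:ℝ) ≤ M := by simp only [hMdef]; linarith
  refine ⟨min 1 (ε / (2 * (2 * M + 1))), by positivity, fun g hg => ?_⟩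
  have hlt1 : dist g g₀ < 1 := lt_of_lt_of_le hg (min_le_left _ _)
  have hdi : ∀ i, ‖g i - g₀ i‖ ≤ dist g g₀ := fun i => by
    rw [← dist_eq_norm]; exact dist_le_pi_dist g g₀ i
  have hMg₀ : ∀ i, ‖g₀ i‖ ≤ M := fun i => by
    have := le_ciSup (f := fun i => ‖g₀ i‖) (Set.Finite.bddAbove (Set.finite_range _)) i
    simp only [hMdef]; linarith
  have hMg : ∀ i, ‖g i‖ ≤ M := fun i => by
    have h1 := norm_sub_norm_le (g i) (g₀ i)
    have h2 := hdi i
    have h3 := le_ciSup (f := fun i => ‖g₀ i‖) (Set.Finite.bddAbove (Set.finite_range _)) i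
    simp only [hMdef]
    linarith
  have k1 := key hm g₀ g M (dist g g₀) hMg₀ (fun i => by rw [norm_sub_rev]; exact hdi i) dist_nonneg
  have k2 := key hm g g₀ M (dist g g₀) hMg hdi dist_nonneg
  have hlt2 : dist g g₀ < ε / (2 * (2 * M + 1)) := lt_of_lt_of_le hg (min_le_right _ _)
  have hbound : dist g g₀ * (2 * M + 1) < ε := by
    rw [lt_div_iff₀ (by positivity)] at hlt2
    nlinarith [dist_nonneg (x := g) (y := g₀)]
  rw [Real.dist_eq, abs_sub_lt_iff]
  constructor <;> linarith

/-- `θ(x) = min_d [max_i ⟨∇F_i(x), d⟩ + ‖d‖²/2]`. -/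
noncomputable def theta {n m : ℕ} (F : Fin m → EuclideanSpace ℝ (Fin n) → ℝ)
    (x : EuclideanSpace ℝ (Fin n)) : ℝ :=
  ⨅ d : EuclideanSpace ℝ (Fin n), phi (fun i => gradient (F i) x) d

theorem stmt_3 {n m : ℕ} (hm : 0 < m) (F : Fin m → EuclideanSpace ℝ (Fin n) → ℝ)
    (hF : ∀ i, ContDiff ℝ 1 (F i)) :
    Continuous (theta F) := by
  have hG : Continuous (fun x : EuclideanSpace ℝ (Fin n) => fun i => gradient (F i) x) := by
    refine continuous_pi fun i => ?_
    have : (fun x => gradient (F i) x) =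
        fun x => (InnerProductSpace.toDual ℝ (EuclideanSpace ℝ (Fin n))).symm
          (fderiv ℝ (F i) x) := rfl
    rw [this]
    exact (InnerProductSpace.toDual ℝ _).symm.continuous.comp
      ((hF i).continuous_fderiv one_ne_zero)
  have : theta F = fun x => Theta (fun i => gradient (F i) x) := rfl
  rw [this]
  exact (cont_Theta hm).comp hG
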